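/- Let Σ ⊂ ℝ^{n+1} be a smooth hypersurface whose second fundamental form satisfies |∇A| = |∇|A|| everywhere and whose shape operator has rank at least 2 at a point p. Then ∇A(p) = 0. -/
import Mathlib

open Module in
lemma rank_vmv_le {n : ℕ} (w v : Fin n → ℝ) : (Matrix.vecMulVec w v).rank ≤ 1 := by
  rw [Matrix.rank]
  have hle : LinearMap.range (Matrix.vecMulVec w v).mulVecLin ≤ Submodule.span ℝ {w} := by
    rintro _ ⟨x, rfl⟩
    have hx : (Matrix.vecMulVec w v).mulVecLin x = (∑ j, v j * x j) • w := by
      funext i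
      simp only [Matrix.mulVecLin_apply, Matrix.mulVec, Matrix.vecMulVec_apply,
        dotProduct, Pi.smul_apply, smul_eq_mul, Finset.sum_mul]
      exact Finset.sum_congr rfl fun j _ => by ring
    rw [hx]
    exact Submodule.smul_mem _ _ (Submodule.mem_span_singleton_self w)
  refine (Submodule.finrank_mono hle).trans ?_
  simpa using finrank_span_le_card ({w} : Set (Fin n → ℝ))

/-- pointwise content of the argument: at a point `p` of a hypersurface
`Σ ⊂ ℝ^{n+1}`, let `h = (h_{ij})` be the (symmetric) second fundamental form and
`T = (h_{ijk})` its covariant derivative `∇A`, fully symmetric by the Codazzi equations.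
If `|∇A| = |∇|A||` — which, since `|∇|A||² = Σ_k (Σ_{ij} h_{ij}h_{ijk})²/|A|²`, is the
equality case `(Σ_{ijk} h_{ijk}²)(Σ_{ij} h_{ij}²) = Σ_k (Σ_{ij} h_{ij}h_{ijk})²` of the
Cauchy–Schwarz inequality — and the shape operator has rank at least 2 at `p`, then
`∇A(p) = 0`. -/
theorem stmt_8 (n : ℕ) (h : Fin n → Fin n → ℝ) (T : Fin n → Fin n → Fin n → ℝ)
    (hsymm : ∀ i j, h i j = h j i)
    (hTsymm : ∀ i j k, T i j k = T i k j ∧ T i j k = T j i k)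
    (hrank : 2 ≤ (Matrix.of h).rank)
    (heq : (∑ k, ∑ i, ∑ j, T i j k ^ 2) * (∑ i, ∑ j, h i j ^ 2)
      = ∑ k, (∑ i, ∑ j, h i j * T i j k) ^ 2) :
    ∀ i j k, T i j k = 0 := by
  have dsum : ∀ f : Fin n → Fin n → ℝ,
      (∑ i, ∑ j, f i j) = ∑ p : Fin n × Fin n, f p.1 p.2 := by
    intro f; rw [Fintype.sum_prod_type]
  set S : ℝ := ∑ i, ∑ j, h i j ^ 2 with hS_def
  have hne : ∃ i j, h i j ≠ 0 := by
    by_contra hall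
    push_neg at hall
    have h0 : (Matrix.of h) = 0 := by ext i j; exact hall i j
    rw [h0, Matrix.rank_zero] at hrank
    omega
  obtain ⟨i0, j0, hij0⟩ := hne
  have hSpos : 0 < S := by
    have h1 : h i0 j0 ^ 2 ≤ S := by
      rw [hS_def, dsum (fun i j => h i j ^ 2)]
      exact Finset.single_le_sum (f := fun p : Fin n × Fin n => h p.1 p.2 ^ 2)
        (fun p _ => sq_nonneg _) (Finset.mem_univ (i0, j0))
    exact lt_of_lt_of_le (by positivity) h1
  set P : Fin n → ℝ := fun k => ∑ i, ∑ j, h i j * T i j k with hP_def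
  set Q : Fin n → ℝ := fun k => ∑ i, ∑ j, T i j k ^ 2 with hQ_def
  have hCS : ∀ k, P k ^ 2 ≤ Q k * S := by
    intro k
    have hcs := Finset.sum_mul_sq_le_sq_mul_sq Finset.univ
      (fun p : Fin n × Fin n => T p.1 p.2 k) (fun p : Fin n × Fin n => h p.1 p.2)
    calc P k ^ 2 = (∑ p : Fin n × Fin n, T p.1 p.2 k * h p.1 p.2) ^ 2 := by
          simp only [hP_def]; rw [dsum (fun i j => h i j * T i j k)]
          congr 1; exact Finset.sum_congr rfl fun p _ => mul_comm _ _
      _ ≤ (∑ p : Fin n × Fin n, T p.1 p.2 k ^ 2) * ∑ p : Fin n × Fin n, h p.1 p.2 ^ 2 := hcs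
      _ = Q k * S := by
          simp only [hQ_def, hS_def]; rw [dsum (fun i j => T i j k ^ 2), dsum (fun i j => h i j ^ 2)]
  have hsum0 : ∑ k, (Q k * S - P k ^ 2) = 0 := by
    rw [Finset.sum_sub_distrib, ← Finset.sum_mul, sub_eq_zero]
    exact heq
  have hDk : ∀ k, Q k * S = P k ^ 2 := by
    intro k
    have h0 := (Finset.sum_eq_zero_iff_of_nonneg
      (fun k _ => sub_nonneg.mpr (hCS k))).mp hsum0 k (Finset.mem_univ k)
    linarith [h0]
  set C : Fin n → ℝ := fun k => P k / S with hC_def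
  have hTC : ∀ i j k, T i j k = C k * h i j := by
    intro i j k
    have hexp : (∑ p : Fin n × Fin n, (T p.1 p.2 k - C k * h p.1 p.2) ^ 2)
        = Q k - 2 * C k * P k + C k ^ 2 * S := by
      have e : ∀ p : Fin n × Fin n, (T p.1 p.2 k - C k * h p.1 p.2) ^ 2
          = T p.1 p.2 k ^ 2 - 2 * C k * (h p.1 p.2 * T p.1 p.2 k) + C k ^ 2 * h p.1 p.2 ^ 2 := by
        intro p; ring
      simp_rw [e, Finset.sum_add_distrib, Finset.sum_sub_distrib, ← Finset.mul_sum]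
      simp only [hQ_def, hP_def, hS_def]
      rw [dsum (fun i j => T i j k ^ 2),
        dsum (fun i j => h i j * T i j k), dsum (fun i j => h i j ^ 2)]
    have hzero : (∑ p : Fin n × Fin n, (T p.1 p.2 k - C k * h p.1 p.2) ^ 2) = 0 := by
      rw [hexp, hC_def]
      have hD := hDk k
      field_simp
      nlinarith [hD]
    have h1 := (Finset.sum_eq_zero_iff_of_nonneg
      (fun p _ => sq_nonneg _)).mp hzero (i, j) (Finset.mem_univ (i, j))
    have h2 := pow_eq_zero_iff (n := 2) (by norm_num) |>.mp h1
    linarith [h2]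
  have key1 : ∀ i j k, C k * h i j = C j * h i k := by
    intro i j k
    have h1 := (hTsymm i j k).1
    rw [hTC i j k, hTC i k j] at h1
    exact h1
  have key2 : ∀ i j k, C k * h i j = C i * h k j := by
    intro i j k
    have h1 : T i j k = T k j i := by
      rw [(hTsymm i j k).2, (hTsymm j i k).1, (hTsymm j k i).2]
    rw [hTC i j k, hTC k j i] at h1
    exact h1
  have hC0 : ∀ k, C k = 0 := by
    intro a
    by_contra hCa
    have hform : ∀ i j, h i j = (h a a / C a ^ 2) * C i * C j := by
      intro i j
      have eA : C a * h i j = C i * h a j := key2 i j a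
      have eB : C a * h a j = C j * h a a := key1 a j a
      field_simp
      linear_combination C a * eA + C i * eB
    have hmat : Matrix.of h = Matrix.vecMulVec (fun i => (h a a / C a ^ 2) * C i) C := by
      ext i j
      rw [Matrix.vecMulVec_apply]
      exact hform i j
    rw [hmat] at hrank
    exact absurd (le_trans hrank (rank_vmv_le _ _)) (by omega)
  intro i j k
  rw [hTC i j k, hC0 k, zero_mul]
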